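/- arXiv:1102.3742 — 2 statements merged into one kernel-verified Lean document; each statement's English description precedes it below -/
import Mathlib

section
/- Kronecker's theorem: if p ∈ ℤ[t] is monic with p(0) ≠ 0 and m(p) = 1, then every root of p is a root of unity. -/
open Polynomial

/-- The Mahler measure of a one-variable complex polynomial. -/
noncomputable def mahlerMeasure (p : Polynomial ℂ) : ℝ :=
  Real.exp ((1 / (2 * Real.pi)) *
    ∫ θ in (0 : ℝ)..(2 * Real.pi),
      Real.log ‖p.eval (Complex.exp (θ * Complex.I))‖)

noncomputable def Complex.abs : AbsoluteValue ℂ ℝ where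
  toFun z := ‖z‖
  map_mul' := norm_mul
  nonneg' := norm_nonneg
  eq_zero' _ := norm_eq_zero
  add_le' := norm_add_le

@[simp] lemma Complex.abs_apply (z : ℂ) : Complex.abs z = ‖z‖ := rfl

lemma Complex.norm_eq_abs (z : ℂ) : ‖z‖ = Complex.abs z := rfl

lemma Complex.abs_exp_ofReal_mul_I (x : ℝ) : Complex.abs (Complex.exp (x * Complex.I)) = 1 :=
  Complex.norm_exp_ofReal_mul_I x

lemma Complex.abs_re_le_abs (z : ℂ) : |z.re| ≤ Complex.abs z := Complex.abs_re_le_norm z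

lemma Complex.continuous_abs : Continuous Complex.abs := continuous_norm

lemma Complex.abs_conj (z : ℂ) : Complex.abs (starRingEnd ℂ z) = Complex.abs z :=
  Complex.norm_conj z

lemma Complex.abs_ofReal (r : ℝ) : Complex.abs (r : ℂ) = |r| := Complex.norm_real r

lemma Complex.abs_intCast (n : ℤ) : Complex.abs (n : ℂ) = |(n : ℝ)| := Complex.norm_intCast n

open Complex MeasureTheory intervalIntegral Filter IntermediateField


lemma meanvalue {F : ℂ → ℂ} (hF : ∀ z ∈ Metric.closedBall (0:ℂ) 1, DifferentiableAt ℂ F z) :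
    ∫ θ in (0:ℝ)..(2*Real.pi), F (Complex.exp (θ * I)) = ((2*Real.pi : ℝ) : ℂ) * F 0 := by
  have hd : DiffContOnCl ℂ F (Metric.ball (0:ℂ) 1) := by
    refine ⟨fun z hz => (hF z (Metric.ball_subset_closedBall hz)).differentiableWithinAt, ?_⟩
    refine fun z hz => (hF z ?_).continuousAt.continuousWithinAt
    rwa [closure_ball _ one_ne_zero] at hz
  have key := hd.circleIntegral_sub_inv_smul (w := 0) (by simp)
  rw [circleIntegral] at key
  simp only [deriv_circleMap, circleMap_zero, smul_eq_mul, sub_zero, Complex.ofReal_one,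
    one_mul] at key
  have h2 : ∀ θ : ℝ, (Complex.exp (θ*I) * I) * ((Complex.exp (θ*I))⁻¹ * F (Complex.exp (θ*I)))
      = I * F (Complex.exp (θ*I)) := by
    intro θ
    have h : Complex.exp (θ*I) ≠ 0 := Complex.exp_ne_zero _
    field_simp
  rw [intervalIntegral.integral_congr (fun θ _ => h2 θ), intervalIntegral.integral_const_mul] at key
  have hI : (2 * Real.pi * I : ℂ) * F 0 = I * (((2*Real.pi : ℝ) : ℂ) * F 0) := by
    push_cast; ring
  rw [hI] at key
  exact mul_left_cancel₀ I_ne_zero key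

lemma L0 {b : ℂ} (hb : Complex.abs b < 1) :
    ∫ θ in (0:ℝ)..(2*Real.pi), Real.log (Complex.abs (1 - b * Complex.exp (θ * I))) = 0 := by
  set F : ℂ → ℂ := fun z => Complex.log (1 - b * z) with hFdef
  have hF : ∀ z ∈ Metric.closedBall (0:ℂ) 1, DifferentiableAt ℂ F z := by
    intro z hz
    rw [Metric.mem_closedBall, dist_zero_right] at hz
    have hslit : (1 - b * z) ∈ Complex.slitPlane := by
      left
      have h1 : Complex.abs (b * z) < 1 := by
        rw [map_mul]
        calc Complex.abs b * Complex.abs z ≤ Complex.abs b * 1 :=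
          mul_le_mul_of_nonneg_left (by simpa using hz) (AbsoluteValue.nonneg _ _)
        _ < 1 := by simpa using hb
      have : |(b * z).re| < 1 := lt_of_le_of_lt (Complex.abs_re_le_abs _) h1
      simp only [Complex.sub_re, Complex.one_re]
      linarith [abs_lt.mp this]
    exact (Complex.differentiableAt_log hslit).comp (f := fun z => 1 - b * z) z (by fun_prop)
  have key := meanvalue hF
  have hre : ∀ θ : ℝ, Real.log (Complex.abs (1 - b * Complex.exp (θ * I)))
      = (F (Complex.exp (θ * I))).re := fun θ => (Complex.log_re _).symm
  rw [intervalIntegral.integral_congr (fun θ _ => hre θ)]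
  have hcont : Continuous fun θ : ℝ => F (Complex.exp (θ * I)) := by
    have : ContinuousOn F (Metric.closedBall (0:ℂ) 1) :=
      fun z hz => ((hF z hz).continuousAt).continuousWithinAt
    refine this.comp_continuous (by fun_prop) fun θ => ?_
    simp [Metric.mem_closedBall, Complex.abs_exp_ofReal_mul_I]
  have hint : IntervalIntegrable (fun θ : ℝ => F (Complex.exp (θ * I))) volume 0 (2*Real.pi) :=
    hcont.intervalIntegrable _ _
  have := (Complex.reCLM.intervalIntegral_comp_comm hint).symm
  simp only [Complex.reCLM_apply] at this
  rw [← this, key]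
  simp [F]

lemma cont_f {a : ℂ} (ha : Complex.abs a ≠ 1) :
    Continuous fun θ : ℝ => Real.log (Complex.abs (Complex.exp (θ*I) - a)) := by
  rw [continuous_iff_continuousAt]
  intro θ
  have hne : Complex.exp (θ*I) - a ≠ 0 :=
    sub_ne_zero.mpr (fun h => ha (by rw [← h, Complex.abs_exp_ofReal_mul_I]))
  have hg : Continuous fun θ : ℝ => Complex.abs (Complex.exp (θ*I) - a) :=
    Complex.continuous_abs.comp (by fun_prop)
  exact hg.continuousAt.log (Complex.abs.ne_zero hne)

lemma L_in {a : ℂ} (ha : Complex.abs a < 1) :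
    ∫ θ in (0:ℝ)..(2*Real.pi), Real.log (Complex.abs (Complex.exp (θ*I) - a)) = 0 := by
  have key : ∀ θ : ℝ, Complex.abs (Complex.exp (θ*I) - a)
      = Complex.abs (1 - (starRingEnd ℂ) a * Complex.exp (θ*I)) := by
    intro θ
    have h1 : Complex.exp (θ*I) - a = Complex.exp (θ*I) * (1 - a * Complex.exp (-(θ*I))) := by
      rw [Complex.exp_neg, mul_sub, mul_one, mul_comm a, ← mul_assoc,
        mul_inv_cancel₀ (Complex.exp_ne_zero _), one_mul]
    rw [h1, map_mul, Complex.abs_exp_ofReal_mul_I, one_mul, ← Complex.abs_conj]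
    congr 1
    rw [map_sub, map_one, map_mul, ← Complex.exp_conj]
    congr 2
    simp
  rw [intervalIntegral.integral_congr (fun θ _ => by rw [key θ])]
  exact L0 (by rwa [Complex.abs_conj])

lemma L_out {a : ℂ} (ha : 1 < Complex.abs a) :
    ∫ θ in (0:ℝ)..(2*Real.pi), Real.log (Complex.abs (Complex.exp (θ*I) - a))
      = 2 * Real.pi * Real.log (Complex.abs a) := by
  have ha0 : a ≠ 0 := by
    intro h; rw [h] at ha; simp at ha; linarith
  have hinv : Complex.abs a⁻¹ < 1 := by
    rw [map_inv₀]
    rw [inv_lt_one_iff₀]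
    right; exact ha
  have hpos : ∀ θ : ℝ, (0:ℝ) < Complex.abs (1 - a⁻¹ * Complex.exp (θ*I)) := by
    intro θ
    have h2 : Complex.abs (a⁻¹ * Complex.exp (θ*I)) < 1 := by
      rw [map_mul, Complex.abs_exp_ofReal_mul_I, mul_one]; exact hinv
    calc (0:ℝ) < 1 - Complex.abs (a⁻¹ * Complex.exp (θ*I)) := by linarith
    _ ≤ Complex.abs (1 - a⁻¹ * Complex.exp (θ*I)) := by
        simpa using (Complex.abs.le_sub 1 (a⁻¹ * Complex.exp (θ*I)))
  have key : ∀ θ : ℝ, Real.log (Complex.abs (Complex.exp (θ*I) - a))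
      = Real.log (Complex.abs a) + Real.log (Complex.abs (1 - a⁻¹ * Complex.exp (θ*I))) := by
    intro θ
    have h1 : Complex.exp (θ*I) - a = (-a) * (1 - a⁻¹ * Complex.exp (θ*I)) := by
      field_simp
      ring
    rw [h1, map_mul, map_neg_eq_map, Real.log_mul (by positivity) (ne_of_gt (hpos θ))]
  rw [intervalIntegral.integral_congr (fun θ _ => by rw [key θ])]
  have hcont : Continuous fun θ : ℝ => Real.log (Complex.abs (1 - a⁻¹ * Complex.exp (θ*I))) := by
    rw [continuous_iff_continuousAt]
    intro θ
    have hg : Continuous fun θ : ℝ => Complex.abs (1 - a⁻¹ * Complex.exp (θ*I)) :=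
      Complex.continuous_abs.comp (by fun_prop)
    exact hg.continuousAt.log (ne_of_gt (hpos θ))
  rw [intervalIntegral.integral_add (intervalIntegrable_const) (hcont.intervalIntegrable _ _),
    L0 hinv, intervalIntegral.integral_const, add_zero, smul_eq_mul, sub_zero, mul_assoc]

lemma hb_le {b : ℂ} (hble : Complex.abs b ≤ 1) (θ : ℝ) :
    Real.log (Complex.abs (Complex.exp (θ*I) - b)) ≤ Real.log 2 := by
  rcases eq_or_ne (Complex.abs (Complex.exp (θ*I) - b)) 0 with h | h
  · rw [h, Real.log_zero]; exact Real.log_nonneg one_le_two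
  · refine Real.log_le_log (lt_of_le_of_ne (AbsoluteValue.nonneg _ _) (Ne.symm h)) ?_
    have h1 := norm_sub_le (Complex.exp (θ*I)) b
    simp only [Complex.norm_eq_abs, Complex.abs_exp_ofReal_mul_I] at h1
    linarith

lemma meas_f (a : ℂ) :
    Measurable fun θ : ℝ => Real.log (Complex.abs (Complex.exp (θ*I) - a)) := by
  have hg : Continuous fun θ : ℝ => Complex.abs (Complex.exp (θ*I) - a) :=
    Complex.continuous_abs.comp (by fun_prop)
  exact Real.measurable_log.comp hg.measurable

lemma bad_countable {a : ℂ} (ha : a ≠ 0) : {θ : ℝ | Complex.exp (θ*I) = a}.Countable := by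
  set S := {θ : ℝ | Complex.exp (θ*I) = a} with hS
  rcases Set.eq_empty_or_nonempty S with h | ⟨θ₀, hθ₀⟩
  · rw [h]; exact Set.countable_empty
  · refine Set.Countable.mono ?_ (Set.countable_range fun n : ℤ => θ₀ + n * (2*Real.pi))
    intro θ hθ
    have hexp : Complex.exp (((θ - θ₀ : ℝ) : ℂ) * I) = 1 := by
      push_cast
      rw [sub_mul, Complex.exp_sub, hθ, hθ₀, div_self ha]
    rw [Complex.exp_eq_one_iff] at hexp
    obtain ⟨n, hn⟩ := hexp
    have h2 : ((θ - θ₀ : ℝ) : ℂ) = (n : ℂ) * (2 * Real.pi) := by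
      apply mul_right_cancel₀ Complex.I_ne_zero
      rw [hn]; ring
    have h3 : θ - θ₀ = (n : ℝ) * (2 * Real.pi) := by exact_mod_cast h2
    refine ⟨n, ?_⟩
    show θ₀ + (n:ℝ) * (2*Real.pi) = θ
    linarith

lemma L_circ {a : ℂ} (ha : Complex.abs a = 1) :
    IntervalIntegrable (fun θ : ℝ => Real.log (Complex.abs (Complex.exp (θ*I) - a)))
      volume 0 (2*Real.pi) ∧
    0 ≤ ∫ θ in (0:ℝ)..(2*Real.pi), Real.log (Complex.abs (Complex.exp (θ*I) - a)) := by
  have hpi : (0:ℝ) < 2 * Real.pi := by positivity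
  set f : ℝ → ℝ := fun θ => Real.log (Complex.abs (Complex.exp (θ*I) - a)) with hfdef
  set g : ℝ → ℝ := fun θ => Real.log 2 - f θ with hgdef
  set s : ℕ → ℝ := fun n => 1 - 1/(n+1) with hsdef
  have hs0 : ∀ n, 0 ≤ s n := by
    intro n
    have : 1/((n:ℝ)+1) ≤ 1 := by
      rw [div_le_one (by positivity)]; simp
    simp only [hsdef]; linarith
  have hs1 : ∀ n, s n < 1 := by
    intro n
    have : 0 < 1/((n:ℝ)+1) := by positivity
    simp only [hsdef]; linarith
  have hslim : Tendsto s atTop (nhds 1) := by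
    have h1 := tendsto_one_div_add_atTop_nhds_zero_nat (𝕜 := ℝ)
    have h2 := (tendsto_const_nhds (x := (1:ℝ)) (f := atTop)).sub h1
    rw [sub_zero] at h2
    simp only [hsdef]
    exact h2
  set fn : ℕ → ℝ → ℝ := fun n θ => Real.log (Complex.abs (Complex.exp (θ*I) - (s n : ℂ) * a))
    with hfndef
  have habs_sn : ∀ n, Complex.abs ((s n : ℂ) * a) = s n := by
    intro n
    rw [map_mul, ha, mul_one, Complex.abs_ofReal, _root_.abs_of_nonneg (hs0 n)]
  have hfn_int : ∀ n, ∫ θ in (0:ℝ)..(2*Real.pi), fn n θ = 0 := by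
    intro n
    exact L_in (by rw [habs_sn]; exact hs1 n)
  have hfn_cont : ∀ n, Continuous (fn n) := fun n => cont_f (by rw [habs_sn]; exact (hs1 n).ne)
  have ha0 : a ≠ 0 := by
    intro h; rw [h] at ha; simp at ha
  -- a.e. convergence
  have hae : ∀ᵐ θ : ℝ, Tendsto (fun n => fn n θ) atTop (nhds (f θ)) := by
    have hSm : volume {θ : ℝ | Complex.exp (θ*I) = a} = 0 :=
      (bad_countable ha0).measure_zero volume
    rw [ae_iff]
    refine measure_mono_null (fun θ hθ => ?_) hSm
    simp only [Set.mem_setOf_eq, not_not] at hθ ⊢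
    by_contra hne
    apply hθ
    have hne' : Complex.exp (θ*I) - a ≠ 0 := sub_ne_zero.mpr hne
    have h1 : Tendsto (fun n => Complex.exp (θ*I) - (s n : ℂ) * a) atTop
        (nhds (Complex.exp (θ*I) - a)) := by
      have : Tendsto (fun n => ((s n : ℂ))) atTop (nhds 1) :=
        (Complex.continuous_ofReal.tendsto 1).comp hslim
      simpa using tendsto_const_nhds.sub (this.mul tendsto_const_nhds)
    have h2 : Tendsto (fun n => Complex.abs (Complex.exp (θ*I) - (s n : ℂ) * a)) atTop
        (nhds (Complex.abs (Complex.exp (θ*I) - a))) :=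
      (Complex.continuous_abs.tendsto _).comp h1
    exact (Real.continuousAt_log (Complex.abs.ne_zero hne')).tendsto.comp h2
  -- Fatou
  have hgn_nonneg : ∀ n θ, 0 ≤ Real.log 2 - fn n θ :=
    fun n θ => sub_nonneg.mpr (hb_le (by rw [habs_sn]; exact (hs1 n).le) θ)
  have hgn_meas : ∀ n, Measurable fun θ => ENNReal.ofReal (Real.log 2 - fn n θ) :=
    fun n => ENNReal.measurable_ofReal.comp ((measurable_const.sub (hfn_cont n).measurable))
  have hgn_lint : ∀ n, ∫⁻ θ in Set.Ioc (0:ℝ) (2*Real.pi), ENNReal.ofReal (Real.log 2 - fn n θ)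
      = ENNReal.ofReal (2 * Real.pi * Real.log 2) := by
    intro n
    have hInt : IntegrableOn (fun θ => Real.log 2 - fn n θ) (Set.Ioc (0:ℝ) (2*Real.pi)) volume :=
      ((continuous_const.sub (hfn_cont n)).integrableOn_Ioc)
    rw [← ofReal_integral_eq_lintegral_ofReal hInt (ae_of_all _ (hgn_nonneg n))]
    congr 1
    have : ∫ θ in Set.Ioc (0:ℝ) (2*Real.pi), (Real.log 2 - fn n θ)
        = ∫ θ in (0:ℝ)..(2*Real.pi), (Real.log 2 - fn n θ) :=
      (intervalIntegral.integral_of_le hpi.le).symm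
    rw [this, intervalIntegral.integral_sub intervalIntegrable_const
      ((hfn_cont n).intervalIntegrable _ _), hfn_int n, sub_zero,
      intervalIntegral.integral_const, smul_eq_mul, sub_zero]
  have key : ∫⁻ θ in Set.Ioc (0:ℝ) (2*Real.pi), ENNReal.ofReal (g θ)
      ≤ ENNReal.ofReal (2 * Real.pi * Real.log 2) := by
    have hae' : ∀ᵐ θ ∂(volume.restrict (Set.Ioc (0:ℝ) (2*Real.pi))),
        ENNReal.ofReal (g θ) = liminf (fun n => ENNReal.ofReal (Real.log 2 - fn n θ)) atTop := by
      refine ae_restrict_of_ae (hae.mono fun θ hθ => ?_)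
      have : Tendsto (fun n => ENNReal.ofReal (Real.log 2 - fn n θ)) atTop
          (nhds (ENNReal.ofReal (g θ))) :=
        (ENNReal.continuous_ofReal.tendsto _).comp (tendsto_const_nhds.sub hθ)
      exact this.liminf_eq.symm
    calc ∫⁻ θ in Set.Ioc (0:ℝ) (2*Real.pi), ENNReal.ofReal (g θ)
        = ∫⁻ θ in Set.Ioc (0:ℝ) (2*Real.pi),
            liminf (fun n => ENNReal.ofReal (Real.log 2 - fn n θ)) atTop :=
          lintegral_congr_ae hae'
      _ ≤ liminf (fun n => ∫⁻ θ in Set.Ioc (0:ℝ) (2*Real.pi),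
            ENNReal.ofReal (Real.log 2 - fn n θ)) atTop := lintegral_liminf_le hgn_meas
      _ = ENNReal.ofReal (2 * Real.pi * Real.log 2) := by
          simp only [hgn_lint]; exact liminf_const _
  have hg_nonneg : ∀ θ, 0 ≤ g θ := fun θ => sub_nonneg.mpr (hb_le ha.le θ)
  have hg_meas : Measurable g := measurable_const.sub (meas_f a)
  have hgint : IntegrableOn g (Set.Ioc (0:ℝ) (2*Real.pi)) volume := by
    refine ⟨hg_meas.aestronglyMeasurable.restrict, ?_⟩
    rw [hasFiniteIntegral_iff_ofReal (ae_of_all _ hg_nonneg)]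
    exact lt_of_le_of_lt key ENNReal.ofReal_lt_top
  have hfint : IntegrableOn f (Set.Ioc (0:ℝ) (2*Real.pi)) volume := by
    have : f = fun θ => Real.log 2 - g θ := by
      funext θ; simp [hgdef]
    rw [this]
    exact (integrableOn_const measure_Ioc_lt_top.ne).sub hgint
  have hII : IntervalIntegrable f volume 0 (2*Real.pi) := by
    rw [intervalIntegrable_iff_integrableOn_Ioc_of_le hpi.le]
    exact hfint
  refine ⟨hII, ?_⟩
  have hgval : ∫ θ in Set.Ioc (0:ℝ) (2*Real.pi), g θ ≤ 2 * Real.pi * Real.log 2 := by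
    have h1 := ofReal_integral_eq_lintegral_ofReal hgint (ae_of_all _ hg_nonneg)
    have h2 : ENNReal.ofReal (∫ θ in Set.Ioc (0:ℝ) (2*Real.pi), g θ)
        ≤ ENNReal.ofReal (2 * Real.pi * Real.log 2) := h1 ▸ key
    exact (ENNReal.ofReal_le_ofReal_iff (by positivity)).mp h2
  have hsplit : ∫ θ in (0:ℝ)..(2*Real.pi), f θ
      = 2 * Real.pi * Real.log 2 - ∫ θ in Set.Ioc (0:ℝ) (2*Real.pi), g θ := by
    rw [intervalIntegral.integral_of_le hpi.le]
    have : ∀ θ, f θ = Real.log 2 - g θ := fun θ => by simp [hgdef]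
    rw [setIntegral_congr_fun measurableSet_Ioc (fun θ _ => this θ)]
    rw [MeasureTheory.integral_sub (integrableOn_const measure_Ioc_lt_top.ne :
      IntegrableOn (fun _ => Real.log 2) (Set.Ioc (0:ℝ) (2*Real.pi)) volume) hgint]
    rw [setIntegral_const, smul_eq_mul, measureReal_def, Real.volume_Ioc]
    rw [ENNReal.toReal_ofReal (by linarith)]
    ring_nf
  rw [hsplit]
  linarith

lemma root_facts (r : ℂ) :
    IntervalIntegrable (fun θ : ℝ => Real.log (Complex.abs (Complex.exp (θ*I) - r)))
      volume 0 (2*Real.pi) ∧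
    0 ≤ ∫ θ in (0:ℝ)..(2*Real.pi), Real.log (Complex.abs (Complex.exp (θ*I) - r)) ∧
    (1 < Complex.abs r →
      0 < ∫ θ in (0:ℝ)..(2*Real.pi), Real.log (Complex.abs (Complex.exp (θ*I) - r))) := by
  rcases lt_trichotomy (Complex.abs r) 1 with h | h | h
  · exact ⟨(cont_f h.ne).intervalIntegrable _ _, by rw [L_in h],
      fun h' => absurd h' (by linarith)⟩
  · exact ⟨(L_circ h).1, (L_circ h).2, fun h' => absurd h' (by rw [h]; exact lt_irrefl 1)⟩
  · refine ⟨(cont_f h.ne').intervalIntegrable _ _, ?_, fun _ => ?_⟩ <;>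
    · rw [L_out h]
      have : 0 < Real.log (Complex.abs r) := Real.log_pos h
      positivity

/-- interval integral of a multiset-sum of functions -/

lemma multiset_integral (F : ℂ → ℝ → ℝ) (m : Multiset ℂ)
    (h : ∀ r ∈ m, IntervalIntegrable (F r) volume 0 (2*Real.pi)) :
    IntervalIntegrable (fun θ => (m.map (fun r => F r θ)).sum) volume 0 (2*Real.pi) ∧
    ∫ θ in (0:ℝ)..(2*Real.pi), (m.map (fun r => F r θ)).sum
      = (m.map (fun r => ∫ θ in (0:ℝ)..(2*Real.pi), F r θ)).sum := by
  induction m using Multiset.induction_on with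
  | empty => simp
  | cons a m ih =>
    have ha : IntervalIntegrable (F a) volume 0 (2*Real.pi) := h a (Multiset.mem_cons_self a m)
    have hm : ∀ r ∈ m, IntervalIntegrable (F r) volume 0 (2*Real.pi) :=
      fun r hr => h r (Multiset.mem_cons_of_mem hr)
    obtain ⟨ih1, ih2⟩ := ih hm
    constructor
    · simpa [Multiset.map_cons, Multiset.sum_cons] using ha.add ih1
    · simp only [Multiset.map_cons, Multiset.sum_cons]
      rw [intervalIntegral.integral_add ha ih1, ih2]

lemma log_prod_multiset (m : Multiset ℂ) (h : ∀ z ∈ m, z ≠ 0) :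
    Real.log (Complex.abs m.prod) = (m.map (fun z => Real.log (Complex.abs z))).sum := by
  induction m using Multiset.induction_on with
  | empty => simp
  | cons a m ih =>
    have ha : a ≠ 0 := h a (Multiset.mem_cons_self a m)
    have hm : m.prod ≠ 0 := Multiset.prod_ne_zero (fun h0 => h 0 (Multiset.mem_cons_of_mem h0) rfl)
    rw [Multiset.prod_cons, map_mul, Real.log_mul (Complex.abs.ne_zero ha)
      (Complex.abs.ne_zero hm), Multiset.map_cons, Multiset.sum_cons,
      ih (fun z hz => h z (Multiset.mem_cons_of_mem hz))]

lemma prod_le_one_of_le_one (m : Multiset ℝ) (h : ∀ x ∈ m, 0 ≤ x ∧ x ≤ 1) :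
    0 ≤ m.prod ∧ m.prod ≤ 1 := by
  induction m using Multiset.induction_on with
  | empty => simp
  | cons a m ih =>
    obtain ⟨ha0, ha1⟩ := h a (Multiset.mem_cons_self a m)
    obtain ⟨h0, h1⟩ := ih (fun x hx => h x (Multiset.mem_cons_of_mem hx))
    rw [Multiset.prod_cons]
    constructor
    · positivity
    · calc a * m.prod ≤ 1 * 1 := mul_le_mul ha1 h1 h0 zero_le_one
      _ = 1 := one_mul 1

/-- Kronecker's theorem: if `p ∈ ℤ[t]` is monic with `p(0) ≠ 0` and `m(p) = 1`, then every
complex root of `p` is a root of unity. -/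
theorem kronecker (p : Polynomial ℤ) (hmonic : p.Monic) (h0 : p.eval 0 ≠ 0)
    (hm : _root_.mahlerMeasure (p.map (Int.castRingHom ℂ)) = 1) :
    ∀ z : ℂ, (p.map (Int.castRingHom ℂ)).IsRoot z → ∃ n : ℕ, 0 < n ∧ z ^ n = 1 := by
  classical
  set P : Polynomial ℂ := p.map (Int.castRingHom ℂ) with hPdef
  have hPmonic : P.Monic := hmonic.map _
  have hPne : P ≠ 0 := hPmonic.ne_zero
  have htwopi : (0:ℝ) < 2 * Real.pi := by positivity
  -- eval as product over roots
  have hProdForm : ∀ w : ℂ, P.eval w = (P.roots.map (fun r => w - r)).prod := by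
    intro w
    conv_lhs => rw [(IsAlgClosed.splits P).eq_prod_roots_of_monic hPmonic]
    rw [eval_multiset_prod, Multiset.map_map]
    apply congrArg Multiset.prod
    apply Multiset.map_congr rfl
    intro r _
    simp
  -- roots nonzero
  have hPeval0 : P.eval 0 = ((p.eval 0 : ℤ) : ℂ) := by
    rw [hPdef, ← Polynomial.coeff_zero_eq_eval_zero, Polynomial.coeff_map, eq_intCast,
      Polynomial.coeff_zero_eq_eval_zero]
  have hP0 : P.eval 0 ≠ 0 := by
    rw [hPeval0]
    exact_mod_cast h0
  have hroots_ne : ∀ r ∈ P.roots, r ≠ 0 := by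
    intro r hr h
    apply hP0
    have := (Polynomial.isRoot_of_mem_roots hr)
    rwa [h] at this
  -- the total integral is the sum of per-root integrals
  set F : ℂ → ℝ → ℝ := fun r θ => Real.log (Complex.abs (Complex.exp (θ*I) - r)) with hFdef
  have hint_all : ∀ r ∈ P.roots, IntervalIntegrable (F r) volume 0 (2*Real.pi) :=
    fun r _ => (root_facts r).1
  obtain ⟨hsum_int, hsum_val⟩ := multiset_integral F P.roots hint_all
  have hbad : ∀ᵐ θ : ℝ, θ ∈ Set.uIoc (0:ℝ) (2*Real.pi) →
      Real.log (Complex.abs (P.eval (Complex.exp (θ*I))))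
        = (P.roots.map (fun r => F r θ)).sum := by
    have hBnull : volume (⋃ r ∈ P.roots.toFinset, {θ : ℝ | Complex.exp (θ*I) = r}) = 0 := by
      refine measure_biUnion_null_iff (P.roots.toFinset.countable_toSet) |>.mpr ?_
      intro r hr
      exact ((bad_countable (hroots_ne r (Multiset.mem_toFinset.mp hr))).measure_zero volume)
    rw [ae_iff]
    refine measure_mono_null (fun θ hθ => ?_) hBnull
    simp only [Set.mem_setOf_eq, not_forall] at hθ
    obtain ⟨_, hne⟩ := hθ
    simp only [Set.mem_iUnion, Set.mem_setOf_eq]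
    by_contra hc
    push_neg at hc
    apply hne
    rw [hProdForm, log_prod_multiset]
    · rw [Multiset.map_map]; rfl
    · intro w hw
      rw [Multiset.mem_map] at hw
      obtain ⟨r, hr, rfl⟩ := hw
      exact sub_ne_zero.mpr fun h => (hc r (Multiset.mem_toFinset.mpr hr)) h
  have hI_eq : ∫ θ in (0:ℝ)..(2*Real.pi), Real.log (Complex.abs (P.eval (Complex.exp (θ*I))))
      = (P.roots.map (fun r => ∫ θ in (0:ℝ)..(2*Real.pi), F r θ)).sum := by
    rw [intervalIntegral.integral_congr_ae hbad, hsum_val]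
  -- Mahler measure = 1 implies total integral = 0
  have hI0 : ∫ θ in (0:ℝ)..(2*Real.pi), Real.log (Complex.abs (P.eval (Complex.exp (θ*I)))) = 0 := by
    rw [_root_.mahlerMeasure, Real.exp_eq_one_iff] at hm
    have hc : (1 / (2*Real.pi) : ℝ) ≠ 0 := by positivity
    field_simp at hm
    convert hm using 2 <;> simp
  -- all roots have modulus ≤ 1
  have hle : ∀ r ∈ P.roots, Complex.abs r ≤ 1 := by
    intro r hr
    by_contra hgt
    push_neg at hgt
    have hpos := (root_facts r).2.2 hgt
    have hmem : (∫ θ in (0:ℝ)..(2*Real.pi), F r θ)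
        ∈ P.roots.map (fun r => ∫ θ in (0:ℝ)..(2*Real.pi), F r θ) :=
      Multiset.mem_map_of_mem _ hr
    have hsingle := Multiset.single_le_sum (fun x hx => ?_) _ hmem
    · rw [← hI_eq, hI0] at hsingle
      linarith
    · rw [Multiset.mem_map] at hx
      obtain ⟨r', _, rfl⟩ := hx
      exact (root_facts r').2.1
  -- product of |roots| = |P(0)| ≥ 1 hence all roots have modulus 1
  have habs_prod : (P.roots.map (fun r => Complex.abs r)).prod = Complex.abs (P.eval 0) := by
    rw [hProdForm 0, map_multiset_prod, Multiset.map_map]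
    apply congrArg Multiset.prod
    apply Multiset.map_congr rfl
    intro r _
    simp
  have hP0abs : (1:ℝ) ≤ Complex.abs (P.eval 0) := by
    rw [hPeval0, Complex.abs_intCast]
    exact_mod_cast Int.one_le_abs h0
  have hall1 : ∀ r ∈ P.roots, Complex.abs r = 1 := by
    intro r hr
    refine le_antisymm (hle r hr) ?_
    have herase := prod_le_one_of_le_one ((P.roots.erase r).map (fun s => Complex.abs s)) ?_
    · have hsplit : Complex.abs r * ((P.roots.erase r).map (fun s => Complex.abs s)).prod
          = (P.roots.map (fun s => Complex.abs s)).prod := Multiset.prod_map_erase hr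
      have hge := hP0abs
      rw [← habs_prod, ← hsplit] at hge
      nlinarith [herase.1, herase.2, Complex.abs.nonneg r]
    · intro y hy
      rw [Multiset.mem_map] at hy
      obtain ⟨r', hr', rfl⟩ := hy
      exact ⟨Complex.abs.nonneg r', hle r' (Multiset.mem_of_mem_erase hr')⟩
  -- algebraic endgame
  intro z hz
  have hzint : IsIntegral ℤ z := ⟨p, hmonic, by
    rw [algebraMap_int_eq, Polynomial.eval₂_eq_eval_map]; exact hz⟩
  have halgQ : IsIntegral ℚ z := hzint.tower_top
  haveI : FiniteDimensional ℚ ℚ⟮z⟯ := IntermediateField.adjoin.finiteDimensional halgQ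
  haveI : NumberField ℚ⟮z⟯ := ⟨⟩
  set x : ℚ⟮z⟯ := IntermediateField.AdjoinSimple.gen ℚ z with hxdef
  have hgen : (algebraMap ℚ⟮z⟯ ℂ) x = z := IntermediateField.AdjoinSimple.algebraMap_gen ℚ z
  have hxev : Polynomial.eval₂ (algebraMap ℤ ℚ⟮z⟯) x p = 0 := by
    apply (algebraMap ℚ⟮z⟯ ℂ).injective
    rw [Polynomial.hom_eval₂, map_zero]
    have hcomp : (algebraMap ℚ⟮z⟯ ℂ).comp (algebraMap ℤ ℚ⟮z⟯) = Int.castRingHom ℂ :=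
      Subsingleton.elim _ _
    rw [hcomp, hgen, Polynomial.eval₂_eq_eval_map]
    exact hz
  have hxint : IsIntegral ℤ x := ⟨p, hmonic, hxev⟩
  have hnorm : ∀ φ : ℚ⟮z⟯ →+* ℂ, ‖φ x‖ = 1 := by
    intro φ
    have h1 : φ (Polynomial.eval₂ (algebraMap ℤ ℚ⟮z⟯) x p) = 0 := by rw [hxev, map_zero]
    rw [Polynomial.hom_eval₂] at h1
    have hcomp : φ.comp (algebraMap ℤ ℚ⟮z⟯) = Int.castRingHom ℂ := Subsingleton.elim _ _
    rw [hcomp] at h1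
    have h3 : (φ x) ∈ P.roots := by
      rw [Polynomial.mem_roots hPne]
      show P.eval (φ x) = 0
      rw [hPdef, Polynomial.eval_map]
      exact h1
    rw [Complex.norm_eq_abs]
    exact hall1 _ h3
  obtain ⟨n, hn, hxn⟩ := NumberField.Embeddings.pow_eq_one_of_norm_eq_one ℚ⟮z⟯ ℂ hxint hnorm
  refine ⟨n, hn, ?_⟩
  have hfin := congrArg (algebraMap ℚ⟮z⟯ ℂ) hxn
  rwa [map_pow, hgen, map_one] at hfin
end

section
/- Let p ∈ ℂ[t] be a nonzero polynomial with no roots on the unit circle. Then lim_{n→∞} (1/n)·ln|∏_{ζ^n = 1} p(ζ)| = ln m(p), i.e. (1/n)·ln|Res(p(t), t^n - 1)| converges to the logarithmic Mahler measure of p. -/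
open Polynomial Filter intervalIntegral

/-- Riemann-sum convergence for a continuous function on `[0, 2π]`. -/
lemma riemann_aux (f : ℝ → ℝ) (hf : Continuous f) :
    Tendsto (fun n : ℕ => (1 / (n : ℝ)) * ∑ k ∈ Finset.range n, f (2 * Real.pi * k / n))
      atTop (nhds ((1 / (2 * Real.pi)) * ∫ x in (0:ℝ)..(2 * Real.pi), f x)) := by
  have hT : (0:ℝ) < 2 * Real.pi := by positivity
  rw [Metric.tendsto_atTop]
  intro ε hε
  -- uniform continuity on [0, 2π]
  obtain ⟨δ, hδ, hunif⟩ := (Metric.uniformContinuousOn_iff.1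
    ((isCompact_Icc : IsCompact (Set.Icc (0:ℝ) (2*Real.pi))).uniformContinuousOn_of_continuous
      hf.continuousOn)) (ε/2) (by positivity)
  obtain ⟨N, hN⟩ := exists_nat_gt (2 * Real.pi / δ)
  refine ⟨max N 1, fun n hn => ?_⟩
  have hn1 : 1 ≤ n := le_trans (le_max_right _ _) hn
  have hnN : (N:ℝ) ≤ n := Nat.cast_le.2 (le_trans (le_max_left _ _) hn)
  have hn0 : (0:ℝ) < n := by exact_mod_cast hn1
  have hstep : 2 * Real.pi / n < δ := by
    rw [div_lt_iff₀ hn0]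
    linarith [(div_lt_iff₀ hδ).1 (lt_of_lt_of_le hN hnN)]
  set a : ℕ → ℝ := fun k => 2 * Real.pi * k / n with ha
  have hmem : ∀ k ≤ n, a k ∈ Set.Icc (0:ℝ) (2*Real.pi) := by
    intro k hk
    constructor
    · positivity
    · rw [ha]
      rw [div_le_iff₀ hn0]
      have : (k:ℝ) ≤ n := Nat.cast_le.2 hk
      nlinarith [Real.pi_pos]
  have hsplit : (∫ x in (0:ℝ)..(2*Real.pi), f x)
      = ∑ k ∈ Finset.range n, ∫ x in a k..a (k+1), f x := by
    rw [intervalIntegral.sum_integral_adjacent_intervals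
      (fun k _ => (hf.intervalIntegrable _ _))]
    have h0 : a 0 = 0 := by simp [ha]
    have hn' : a n = 2 * Real.pi := by
      rw [ha]; field_simp
    rw [h0, hn']
  have key : ∀ k ∈ Finset.range n,
      |(1 / (n:ℝ)) * f (a k) - (1 / (2*Real.pi)) * ∫ x in a k..a (k+1), f x|
        ≤ (1 / (n:ℝ)) * (ε/2) := by
    intro k hk
    rw [Finset.mem_range] at hk
    have hak : a k ≤ a (k+1) := by
      rw [ha]; push_cast
      gcongr
      linarith
    have hlen : a (k+1) - a k = 2 * Real.pi / n := by
      rw [ha]; push_cast; ring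
    have hconst : (1 / (n:ℝ)) * f (a k)
        = (1 / (2*Real.pi)) * ∫ x in a k..a (k+1), f (a k) := by
      rw [intervalIntegral.integral_const, smul_eq_mul, hlen]
      field_simp
    rw [hconst, ← mul_sub, ← intervalIntegral.integral_sub
      (intervalIntegrable_const) (hf.intervalIntegrable _ _), abs_mul]
    have hbound : ‖∫ x in a k..a (k+1), (f (a k) - f x)‖ ≤ (ε/2) * |a (k+1) - a k| := by
      apply intervalIntegral.norm_integral_le_of_norm_le_const
      intro x hx
      rw [Real.norm_eq_abs]
      rw [Set.uIoc_of_le hak] at hx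
      have hxI : x ∈ Set.Icc (0:ℝ) (2*Real.pi) := by
        constructor
        · exact le_trans (hmem k (le_of_lt hk)).1 (le_of_lt hx.1)
        · exact le_trans hx.2 (hmem (k+1) hk).2
      have hdist : dist (a k) x < δ := by
        rw [Real.dist_eq, abs_sub_comm, abs_of_nonneg (by linarith [hx.1])]
        calc x - a k ≤ a (k+1) - a k := by linarith [hx.2]
        _ = 2 * Real.pi / n := hlen
        _ < δ := hstep
      have := hunif (a k) (hmem k (le_of_lt hk)) x hxI hdist
      rw [Real.dist_eq] at this
      exact le_of_lt this
    rw [Real.norm_eq_abs] at hbound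
    calc |1 / (2*Real.pi)| * |∫ x in a k..a (k+1), (f (a k) - f x)|
        ≤ |1 / (2*Real.pi)| * ((ε/2) * |a (k+1) - a k|) := by
          exact mul_le_mul_of_nonneg_left hbound (abs_nonneg _)
      _ = (ε/2) * (1/(2*Real.pi) * (2*Real.pi/(n:ℝ))) := by
          rw [hlen, abs_of_pos (show (0:ℝ) < 1/(2*Real.pi) by positivity),
            abs_of_pos (show (0:ℝ) < 2*Real.pi/n by positivity)]
          ring
      _ = (1 / (n:ℝ)) * (ε/2) := by
          have h1 : 1/(2*Real.pi) * (2*Real.pi/(n:ℝ)) = 1/(n:ℝ) := by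
            have hπ : (2*Real.pi) ≠ 0 := by positivity
            field_simp
          rw [h1]; ring
  -- combine
  have : dist ((1 / (n:ℝ)) * ∑ k ∈ Finset.range n, f (a k))
      ((1 / (2*Real.pi)) * ∫ x in (0:ℝ)..(2*Real.pi), f x) ≤ ε/2 := by
    rw [Real.dist_eq, hsplit, Finset.mul_sum, Finset.mul_sum, ← Finset.sum_sub_distrib]
    calc |∑ k ∈ Finset.range n, ((1 / (n:ℝ)) * f (a k)
          - (1 / (2*Real.pi)) * ∫ x in a k..a (k+1), f x)|
        ≤ ∑ k ∈ Finset.range n, |(1 / (n:ℝ)) * f (a k)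
          - (1 / (2*Real.pi)) * ∫ x in a k..a (k+1), f x| := Finset.abs_sum_le_sum_abs _ _
      _ ≤ ∑ k ∈ Finset.range n, (1 / (n:ℝ)) * (ε/2) := Finset.sum_le_sum key
      _ = ε/2 := by
          rw [Finset.sum_const, Finset.card_range, nsmul_eq_mul]
          field_simp
  exact lt_of_le_of_lt this (by linarith)


/-- If `p ∈ ℂ[t]` is nonzero with no roots on the unit circle, then
`(1/n)·ln|∏_{ζⁿ=1} p(ζ)| → ln m(p)` as `n → ∞`. -/
theorem tendsto_log_prod_rootsOfUnity (p : Polynomial ℂ) (hp : p ≠ 0)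
    (hcirc : ∀ z : ℂ, ‖z‖ = 1 → p.eval z ≠ 0) :
    Filter.Tendsto
      (fun n : ℕ => (1 / (n : ℝ)) *
        Real.log ‖
          (∏ k ∈ Finset.range n,
            p.eval (Complex.exp (2 * Real.pi * Complex.I * k / n)))‖)
      Filter.atTop (nhds (Real.log (_root_.mahlerMeasure p))) := by

  have habs : ∀ θ : ℝ, ‖Complex.exp ((θ:ℂ) * Complex.I)‖ = 1 := by
    intro θ
    rw [Complex.norm_exp]
    simp
  set f : ℝ → ℝ := fun θ => Real.log ‖p.eval (Complex.exp ((θ:ℂ) * Complex.I))‖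
    with hfdef
  have hne : ∀ θ : ℝ, p.eval (Complex.exp ((θ:ℂ) * Complex.I)) ≠ 0 := fun θ => hcirc _ (habs θ)
  have hfc : Continuous f := by
    apply Continuous.log
    · exact continuous_norm.comp ((Polynomial.continuous p).comp
        (Complex.continuous_exp.comp (Complex.continuous_ofReal.mul continuous_const)))
    · exact fun θ => norm_ne_zero_iff.2 (hne θ)
  have hlog : Real.log (_root_.mahlerMeasure p)
      = (1/(2*Real.pi)) * ∫ x in (0:ℝ)..(2*Real.pi), f x := Real.log_exp _
  rw [hlog]
  refine (riemann_aux f hfc).congr fun n => ?_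
  congr 1
  rw [show (∏ k ∈ Finset.range n, p.eval (Complex.exp (2*Real.pi*Complex.I*k/n)))
      = ∏ k ∈ Finset.range n, p.eval (Complex.exp (((2*Real.pi*(k:ℝ)/n : ℝ) : ℂ) * Complex.I))
    from Finset.prod_congr rfl fun k _ => by congr 1; push_cast; ring]
  rw [norm_prod]
  exact (Real.log_prod fun k _ => norm_ne_zero_iff.2 (hne _)).symm
end
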